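/- arXiv:2509.19011 — 3 statements merged into one kernel-verified Lean document; each statement's English description precedes it below -/
import Mathlib

section
/- Let 𝒜 be a central arrangement in ℂ^k (k ≥ 1) defined by the reduced polynomial f ∈ ℂ[x₁,…,x_k], and let c𝒜 be its coning in ℂ^{k+1}, defined by x_{k+1}·f. If θ_E, θ₂, …, θ_s is a minimal homogeneous generating set of D(𝒜), then θ_E^{(k+1)}, θ₂, …, θ_s, x_{k+1}∂/∂x_{k+1} is a minimal homogeneous generating set of D(c𝒜), where θ_E^{(k+1)} is the Euler derivation in k+1 variables. In particular, exp(c𝒜) = (1, deg θ_E, deg θ₂, …, deg θ_s). -/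
open MvPolynomial

noncomputable section

/-- The polynomial ring `S = ℂ[x₁,…,x_ℓ]`. -/
abbrev PS (ℓ : ℕ) : Type := MvPolynomial (Fin ℓ) ℂ

/-- The module of ℂ-derivations of `S`. -/
abbrev Der (ℓ : ℕ) : Type := Derivation ℂ (PS ℓ) (PS ℓ)

/-- The logarithmic derivation module of a set of defining forms in a ℂ-algebra. -/
def logDer {R : Type} [CommRing R] [Algebra ℂ R] (A : Set R) :
    Submodule R (Derivation ℂ R R) where
  carrier := {θ | ∀ α ∈ A, θ α ∈ Ideal.span {α}}
  add_mem' := fun ha hb α hα => by simpa using add_mem (ha α hα) (hb α hα)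
  zero_mem' := fun α hα => by simp
  smul_mem' := fun c θ h α hα => by simpa using Ideal.mul_mem_left _ c (h α hα)

/-- The submodule `D₀` of derivations annihilating every defining form. -/
def logDer0 {R : Type} [CommRing R] [Algebra ℂ R] (A : Set R) :
    Submodule R (Derivation ℂ R R) where
  carrier := {θ | ∀ α ∈ A, θ α = 0}
  add_mem' := fun ha hb α hα => by simp [Set.mem_setOf_eq] at *; simp [ha α hα, hb α hα]
  zero_mem' := fun α hα => by simp
  smul_mem' := fun c θ h α hα => by simp [Set.mem_setOf_eq] at *; simp [h α hα]

/-- The Euler derivation `Σ xᵢ ∂ᵢ`. -/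
def euler (ℓ : ℕ) : Der ℓ := mkDerivation ℂ (fun i : Fin ℓ => X i)

/-- A derivation is homogeneous of (polynomial) degree `d` if it sends every variable to a
homogeneous polynomial of degree `d`. -/
def IsHomogDer {ℓ : ℕ} (θ : Der ℓ) (d : ℕ) : Prop := ∀ i, (θ (X i)).IsHomogeneous d

/-- A (nonzero) linear form. -/
def IsLinForm {ℓ : ℕ} (α : PS ℓ) : Prop := α.IsHomogeneous 1 ∧ α ≠ 0

/-- A minimal generating family of the logarithmic derivation module of `A`. -/
def IsMinGen {R : Type} [CommRing R] [Algebra ℂ R] (A : Set R) {s : ℕ}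
    (θ : Fin s → Derivation ℂ R R) : Prop :=
  Submodule.span R (Set.range θ) = logDer A ∧
    ∀ i, θ i ∉ Submodule.span R (θ '' {j | j ≠ i})

/-- A minimal generating family of `D₀(A)`. -/
def IsMinGen0 {R : Type} [CommRing R] [Algebra ℂ R] (A : Set R) {s : ℕ}
    (θ : Fin s → Derivation ℂ R R) : Prop :=
  Submodule.span R (Set.range θ) = logDer0 A ∧
    ∀ i, θ i ∉ Submodule.span R (θ '' {j | j ≠ i})

/-- `exp(A) = M`:  the multiset of degrees of a minimal homogeneous generating family
of `D(A)` is `M`. -/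
def HasExp {ℓ : ℕ} (A : Set (PS ℓ)) (M : Multiset ℕ) : Prop :=
  ∃ (s : ℕ) (θ : Fin s → Der ℓ) (d : Fin s → ℕ),
    (∀ i, IsHomogDer (θ i) (d i)) ∧ IsMinGen A θ ∧ M = Multiset.map d Finset.univ.val

/-- `exp₀(A) = M`: the multiset of degrees of a minimal homogeneous generating family
of `D₀(A)` is `M`. -/
def HasExp0 {ℓ : ℕ} (A : Set (PS ℓ)) (M : Multiset ℕ) : Prop :=
  ∃ (s : ℕ) (θ : Fin s → Der ℓ) (d : Fin s → ℕ),
    (∀ i, IsHomogDer (θ i) (d i)) ∧ IsMinGen0 A θ ∧ M = Multiset.map d Finset.univ.val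

/-- The rank of a finite set of linear forms (= codimension of the corresponding flat). -/
def rk {ℓ : ℕ} (B : Finset (PS ℓ)) : ℕ :=
  Module.finrank ℂ (Submodule.span ℂ (B : Set (PS ℓ)))

/-- `H = {α = 0}` is combinatorially generic with respect to the arrangement `A` in `ℂ^m`:
it contains no nonzero flat of `A`, i.e. adding it to any subarrangement raises the rank
until the ambient rank `m` is reached. -/
def CombGeneric {ℓ : ℕ} (α : PS ℓ) (A : Finset (PS ℓ)) (m : ℕ) : Prop :=
  ∀ B ⊆ A, rk (insert α B) = min (rk B + 1) m

/-- Two arrangements have the same combinatorics (isomorphic intersection lattices):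
there is a bijection of the hyperplanes preserving the rank of every subarrangement. -/
def SameComb {ℓ ℓ' : ℕ} (A₁ : Finset (PS ℓ)) (A₂ : Finset (PS ℓ')) : Prop :=
  ∃ e : PS ℓ → PS ℓ', Set.BijOn e A₁ A₂ ∧
    ∀ B ⊆ A₁, rk (B.image e) = rk B

/-- The number of hyperplanes of the restriction of `A` to `{α = 0}`: the number of
proportionality classes of the (nonzero) images of the forms of `A` in `S/(α)`. -/
def nRes {ℓ : ℕ} (α : PS ℓ) (A : Finset (PS ℓ)) : ℕ :=
  letI : DecidableEq (Submodule ℂ (PS ℓ ⧸ Ideal.span {α})) := Classical.decEq _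
  (A.image fun β =>
    Submodule.span ℂ {Ideal.Quotient.mk (Ideal.span {α}) β}).card

end

noncomputable section

/-- Extend a derivation of `ℂ[x₁,…,x_k]` to a derivation of `ℂ[x₁,…,x_{k+1}]`
acting trivially on the new variable. -/
def extendDer {k : ℕ} (θ : Der k) : Der (k + 1) :=
  mkDerivation ℂ (Fin.snoc (fun i : Fin k => rename Fin.castSucc (θ (X i))) 0)

/-- The derivation `x_{k+1} ∂/∂x_{k+1}`. -/
def lastDer (k : ℕ) : Der (k + 1) :=
  mkDerivation ℂ (fun i : Fin (k + 1) => if i = Fin.last k then X i else 0)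

noncomputable section Aux
variable {k : ℕ}

/-- iso sending the last variable to the `Polynomial.X`. -/
def emb (k : ℕ) : PS (k+1) ≃ₐ[ℂ] Polynomial (PS k) :=
  (renameEquiv ℂ (finRotate (k+1))).trans (finSuccEquiv ℂ k)

@[simp] lemma emb_X_last : emb k (X (Fin.last k)) = Polynomial.X := by
  simp [emb, renameEquiv_apply, finRotate_last, finSuccEquiv_X_zero]

@[simp] lemma emb_X_castSucc (i : Fin k) :
    emb k (X (Fin.castSucc i)) = Polynomial.C (X i) := by
  have h : finRotate (k+1) (Fin.castSucc i) = Fin.succ i := by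
    simp [Fin.castSucc, Fin.succ, finRotate_succ_apply]
    ext
    simp [Fin.add_def, Nat.mod_eq_of_lt (Nat.succ_lt_succ i.isLt)]
  simp [emb, renameEquiv_apply, h, finSuccEquiv_X_succ]

@[simp] lemma emb_rename (p : PS k) :
    emb k (rename Fin.castSucc p) = Polynomial.C p := by
  have : (emb k).toAlgHom.comp (rename (R := ℂ) (Fin.castSucc (n := k))) =
      Polynomial.CAlgHom := by
    apply MvPolynomial.algHom_ext
    intro i
    simp [Polynomial.CAlgHom]
  exact congrArg (fun f => f p) (congrArg (DFunLike.coe) this)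

end Aux
noncomputable section Aux2
variable {k : ℕ}

@[simp] lemma extendDer_X_castSucc (θ : Der k) (i : Fin k) :
    extendDer θ (X (Fin.castSucc i)) = rename Fin.castSucc (θ (X i)) := by
  simp [extendDer, mkDerivation_X, Fin.snoc_castSucc]

@[simp] lemma extendDer_X_last (θ : Der k) :
    extendDer θ (X (Fin.last k)) = 0 := by
  simp [extendDer, mkDerivation_X, Fin.snoc_last]

@[simp] lemma lastDer_X_last : lastDer k (X (Fin.last k)) = X (Fin.last k) := by
  simp [lastDer, mkDerivation_X]

@[simp] lemma lastDer_X_castSucc (i : Fin k) :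
    lastDer k (X (Fin.castSucc i)) = 0 := by
  simp [lastDer, mkDerivation_X, Fin.castSucc_lt_last i |>.ne]

@[simp] lemma euler_X {ℓ : ℕ} (i : Fin ℓ) : euler ℓ (X i) = X i := by
  simp [euler, mkDerivation_X]

lemma extendDer_rename (θ : Der k) (p : PS k) :
    extendDer θ (rename Fin.castSucc p) = rename Fin.castSucc (θ p) := by
  induction p using MvPolynomial.induction_on with
  | C a => simp [Derivation.map_algebraMap, ← MvPolynomial.algebraMap_eq]
  | add p q hp hq => simp [hp, hq]
  | mul_X p i hp => simp [hp, Derivation.leibniz]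

lemma lastDer_rename (p : PS k) :
    lastDer k (rename Fin.castSucc p) = 0 := by
  induction p using MvPolynomial.induction_on with
  | C a => simp [Derivation.map_algebraMap, ← MvPolynomial.algebraMap_eq]
  | add p q hp hq => simp [hp, hq]
  | mul_X p i hp => simp [hp, Derivation.leibniz]

lemma extendDer_add (θ₁ θ₂ : Der k) :
    extendDer (θ₁ + θ₂) = extendDer θ₁ + extendDer θ₂ := by
  apply derivation_ext
  intro i
  induction i using Fin.lastCases with
  | last => simp
  | cast i => simp

lemma extendDer_smul (c : PS k) (θ : Der k) :
    extendDer (c • θ) = rename Fin.castSucc c • extendDer θ := by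
  apply derivation_ext
  intro i
  induction i using Fin.lastCases with
  | last => simp
  | cast i => simp

lemma extendDer_zero : extendDer (0 : Der k) = 0 := by
  apply derivation_ext
  intro i
  induction i using Fin.lastCases with
  | last => simp
  | cast i => simp

/-- euler = extendDer euler + lastDer -/
lemma euler_succ_eq : euler (k+1) = extendDer (euler k) + lastDer k := by
  apply derivation_ext
  intro i
  induction i using Fin.lastCases with
  | last => simp
  | cast i => simp

end Aux2
noncomputable section Aux3
variable {k : ℕ}

lemma single_of_sum_eq_one {σ : Type*} {u : σ →₀ ℕ} (h : ∑ i ∈ u.support, u i = 1) :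
    ∃ i, u = Finsupp.single i 1 := by
  have hpos : ∀ i ∈ u.support, 1 ≤ u i := fun i hi =>
    Nat.one_le_iff_ne_zero.2 (Finsupp.mem_support_iff.1 hi)
  have hcard : u.support.card ≤ 1 := by
    calc u.support.card = ∑ _i ∈ u.support, 1 := by simp
    _ ≤ ∑ i ∈ u.support, u i := Finset.sum_le_sum hpos
    _ = 1 := h
  interval_cases hc : u.support.card
  · rw [Finset.card_eq_zero] at hc
    rw [hc] at h
    simp at h
  · obtain ⟨i, hi⟩ := Finset.card_eq_one.1 hc
    refine ⟨i, ?_⟩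
    have hu := (Finsupp.support_eq_singleton.1 hi).2
    have : u i = 1 := by rw [hi] at h; simpa using h
    rwa [this] at hu

lemma euler_linear {ℓ : ℕ} {p : PS ℓ} (hp : p.IsHomogeneous 1) : euler ℓ p = p := by
  conv_lhs => rw [← p.support_sum_monomial_coeff]
  conv_rhs => rw [← p.support_sum_monomial_coeff]
  rw [map_sum]
  refine Finset.sum_congr rfl fun u hu => ?_
  obtain ⟨i, rfl⟩ := single_of_sum_eq_one (u := u) (by
    have := hp (MvPolynomial.mem_support_iff.1 hu)
    have h2 := Finsupp.degree_eq_weight_one (σ := Fin ℓ) (R := ℕ)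
    exact (DFunLike.congr_fun h2 u).trans this)
  have hX : (monomial (Finsupp.single i 1)) (coeff (Finsupp.single i 1) p)
      = C (coeff (Finsupp.single i 1) p) * X i := by
    rw [MvPolynomial.X, C_mul_monomial, mul_one]
  rw [hX]
  simp [Derivation.leibniz, smul_eq_mul, ← MvPolynomial.algebraMap_eq]

end Aux3
noncomputable section Aux4
variable {k : ℕ}

/-- The `m`-th coefficient (w.r.t. the last variable) of a derivation. -/
def coefDer (ξ : Der (k+1)) (m : ℕ) : Der k where
  toLinearMap :=
  { toFun := fun p => (emb k (ξ (rename Fin.castSucc p))).coeff m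
    map_add' := by intros; simp
    map_smul' := by intros; simp }
  map_one_eq_zero' := by simp
  leibniz' := by
    intro a b
    simp only [LinearMap.coe_mk, AddHom.coe_mk, map_mul, Derivation.leibniz, map_add,
      Polynomial.coeff_add, smul_eq_mul, emb_rename, Polynomial.coeff_C_mul]

@[simp] lemma coefDer_apply (ξ : Der (k+1)) (m : ℕ) (p : PS k) :
    coefDer ξ m p = (emb k (ξ (rename Fin.castSucc p))).coeff m := rfl

lemma coefDer_mem (ξ : Der (k+1)) (m : ℕ) {α : PS k}
    (h : ξ (rename Fin.castSucc α) ∈ Ideal.span {rename Fin.castSucc α}) :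
    coefDer ξ m α ∈ Ideal.span {α} := by
  obtain ⟨t, ht⟩ := Ideal.mem_span_singleton'.1 h
  rw [Ideal.mem_span_singleton']
  refine ⟨(emb k t).coeff m, ?_⟩
  rw [coefDer_apply, ← ht, map_mul, emb_rename, mul_comm (emb k t), Polynomial.coeff_C_mul, mul_comm α]

end Aux4
noncomputable section Aux5
variable {k : ℕ}

lemma Derivation.sum_apply' {R A M ι : Type*} [CommSemiring R] [CommSemiring A] [Algebra R A]
    [AddCommMonoid M] [Module A M] [Module R M] (s : Finset ι)
    (D : ι → Derivation R A M) (p : A) : (∑ i ∈ s, D i) p = ∑ i ∈ s, D i p := by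
  have := map_sum (Derivation.coeFnAddMonoidHom (R := R) (A := A) (M := M)) D s
  calc (∑ i ∈ s, D i) p = (Derivation.coeFnAddMonoidHom (∑ i ∈ s, D i)) p := rfl
  _ = ∑ i ∈ s, D i p := by rw [this, Finset.sum_apply]; rfl

/-- Reconstruction of a derivation killing the last variable from its coefficients. -/
lemma recon (ξ : Der (k+1)) (hy : ξ (X (Fin.last k)) = 0) :
    ξ = ∑ m ∈ Finset.range
        ((Finset.univ.sup fun i : Fin k => (emb k (ξ (X (Fin.castSucc i)))).natDegree) + 1),
      (X (Fin.last k) : PS (k+1)) ^ m • extendDer (coefDer ξ m) := by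
  set N := (Finset.univ.sup fun i : Fin k => (emb k (ξ (X (Fin.castSucc i)))).natDegree) + 1
  apply derivation_ext
  intro j
  rw [Derivation.sum_apply']
  induction j using Fin.lastCases with
  | last =>
    rw [hy]
    refine (Finset.sum_eq_zero fun m _ => ?_).symm
    rw [Derivation.smul_apply, extendDer_X_last, smul_zero]
  | cast i =>
    have hN : (emb k (ξ (X (Fin.castSucc i)))).natDegree < N :=
      Nat.lt_succ_of_le (Finset.le_sup (f := fun i : Fin k => (emb k (ξ (X (Fin.castSucc i)))).natDegree) (Finset.mem_univ i))
    apply (emb k).injective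
    rw [map_sum]
    conv_lhs => rw [(emb k (ξ (X (Fin.castSucc i)))).as_sum_range' N hN]
    refine Finset.sum_congr rfl fun m _ => ?_
    rw [Derivation.smul_apply, extendDer_X_castSucc, coefDer_apply, rename_X,
      smul_eq_mul, map_mul, map_pow, emb_X_last, emb_rename,
      mul_comm, Polynomial.C_mul_X_pow_eq_monomial]

end Aux5
noncomputable section Aux6
variable {k : ℕ}

@[simp] lemma coefDer_euler : coefDer (euler (k+1)) 0 = euler k := by
  apply derivation_ext
  intro i
  simp [rename_X]

@[simp] lemma coefDer_extendDer (θ' : Der k) : coefDer (extendDer θ') 0 = θ' := by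
  apply derivation_ext
  intro i
  simp [rename_X]

@[simp] lemma coefDer_lastDer : coefDer (lastDer k) 0 = 0 := by
  apply derivation_ext
  intro i
  simp [rename_X]

lemma coefDer_sum_smul {ι : Type*} (t : Finset ι) (c : ι → PS (k+1)) (D : ι → Der (k+1)) :
    coefDer (∑ j ∈ t, c j • D j) 0 =
      ∑ j ∈ t, ((emb k (c j)).coeff 0) • coefDer (D j) 0 := by
  apply Derivation.ext
  intro p
  rw [Derivation.sum_apply', coefDer_apply, Derivation.sum_apply', map_sum,
    Polynomial.finset_sum_coeff]
  refine Finset.sum_congr rfl fun j _ => ?_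
  simp only [Derivation.smul_apply, smul_eq_mul, map_mul, Polynomial.mul_coeff_zero,
    coefDer_apply]

end Aux6

set_option maxHeartbeats 1000000

/-- if `θ_E, θ₂, …, θ_s` minimally generate `D(𝒜)`, then
`θ_E^{(k+1)}, θ₂, …, θ_s, x_{k+1}∂_{k+1}` minimally generate `D(c𝒜)` for the coning `c𝒜`;
in particular `exp(c𝒜) = (1, deg θ_E, deg θ₂, …, deg θ_s)`. -/
theorem coning_minimal_generators {k : ℕ} (A : Finset (PS k))
    (hA : ∀ α ∈ A, IsLinForm α) (hred : ∀ α ∈ A, ∀ β ∈ A, α ≠ β → ∀ c : ℂ, α ≠ c • β)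
    {s : ℕ} (θ : Fin (s + 1) → Der k) (d : Fin (s + 1) → ℕ)
    (hθE : θ 0 = euler k) (hd0 : d 0 = 1)
    (hhom : ∀ i, IsHomogDer (θ i) (d i))
    (hmin : IsMinGen (A : Set (PS k)) θ) :
    (IsMinGen
      ((insert (X (Fin.last k)) (A.image (rename Fin.castSucc)) : Finset (PS (k + 1))) :
        Set (PS (k + 1)))
      (Fin.snoc (fun i : Fin (s + 1) =>
          if i = 0 then euler (k + 1) else extendDer (θ i)) (lastDer k))) ∧
    (∀ i : Fin (s + 1), i ≠ 0 → IsHomogDer (extendDer (θ i)) (d i)) ∧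
    IsHomogDer (euler (k + 1)) 1 ∧ IsHomogDer (lastDer k) 1 ∧
    HasExp
      ((insert (X (Fin.last k)) (A.image (rename Fin.castSucc)) : Finset (PS (k + 1))) :
        Set (PS (k + 1)))
      (1 ::ₘ Multiset.map d Finset.univ.val) := by
  classical
  set cA : Finset (PS (k+1)) := insert (X (Fin.last k)) (A.image (rename Fin.castSucc)) with hcA
  set η : Fin (s + 2) → Der (k + 1) := Fin.snoc (fun i : Fin (s + 1) =>
      if i = 0 then euler (k + 1) else extendDer (θ i)) (lastDer k) with hη
  have hmemcA : ∀ β ∈ (cA : Set (PS (k+1))),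
      β = X (Fin.last k) ∨ ∃ α ∈ A, rename Fin.castSucc α = β := by
    intro β hβ
    simpa [hcA] using hβ
  have hθmem : ∀ i, ∀ α ∈ A, θ i α ∈ Ideal.span {α} := by
    intro i
    have : θ i ∈ logDer (A : Set (PS k)) := hmin.1 ▸ Submodule.subset_span ⟨i, rfl⟩
    exact this
  -- each member of the family is a logarithmic derivation of the coning
  have hlastmem : lastDer k ∈ logDer (cA : Set (PS (k+1))) := by
    intro β hβ
    rcases hmemcA β hβ with rfl | ⟨α, hα, rfl⟩
    · rw [lastDer_X_last]; exact Ideal.subset_span rfl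
    · rw [lastDer_rename]; exact zero_mem _
  have heulermem : euler (k+1) ∈ logDer (cA : Set (PS (k+1))) := by
    intro β hβ
    have hlin : β.IsHomogeneous 1 := by
      rcases hmemcA β hβ with rfl | ⟨α, hα, rfl⟩
      · exact isHomogeneous_X ℂ _
      · exact (hA α hα).1.rename_isHomogeneous
    rw [euler_linear hlin]
    exact Ideal.subset_span rfl
  have hextmem : ∀ i, extendDer (θ i) ∈ logDer (cA : Set (PS (k+1))) := by
    intro i β hβ
    rcases hmemcA β hβ with rfl | ⟨α, hα, rfl⟩
    · rw [extendDer_X_last]; exact zero_mem _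
    · rw [extendDer_rename]
      obtain ⟨t, ht⟩ := Ideal.mem_span_singleton'.1 (hθmem i α hα)
      rw [Ideal.mem_span_singleton']
      exact ⟨rename Fin.castSucc t, by rw [← map_mul, ht]⟩
  have hηmem : ∀ j, η j ∈ logDer (cA : Set (PS (k+1))) := by
    intro j
    induction j using Fin.lastCases with
    | last => rw [hη, Fin.snoc_last]; exact hlastmem
    | cast j =>
      rw [hη, Fin.snoc_castSucc]
      by_cases hj : j = 0
      · rw [if_pos hj]; exact heulermem
      · rw [if_neg hj]; exact hextmem j
  -- span of the family is contained in the log module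
  have hspan_le : Submodule.span (PS (k+1)) (Set.range η) ≤ logDer (cA : Set (PS (k+1))) :=
    Submodule.span_le.2 (Set.range_subset_iff.2 hηmem)
  -- extendDer maps the span of θ into the span of η
  have hext_span : ∀ θ' ∈ Submodule.span (PS k) (Set.range θ),
      extendDer θ' ∈ Submodule.span (PS (k+1)) (Set.range η) := by
    intro θ' hθ'
    induction hθ' using Submodule.span_induction with
    | mem x hx =>
      obtain ⟨j, rfl⟩ := hx
      by_cases hj : j = 0
      · subst hj
        rw [hθE]
        have h1 : euler (k+1) ∈ Submodule.span (PS (k+1)) (Set.range η) := by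
          refine Submodule.subset_span ⟨Fin.castSucc 0, ?_⟩
          rw [hη, Fin.snoc_castSucc, if_pos rfl]
        have h2 : lastDer k ∈ Submodule.span (PS (k+1)) (Set.range η) := by
          refine Submodule.subset_span ⟨Fin.last (s+1), ?_⟩
          rw [hη, Fin.snoc_last]
        have := Submodule.sub_mem _ h1 h2
        rwa [euler_succ_eq, add_sub_cancel_right] at this
      · refine Submodule.subset_span ⟨Fin.castSucc j, ?_⟩
        rw [hη, Fin.snoc_castSucc, if_neg hj]
    | zero => rw [extendDer_zero]; exact zero_mem _
    | add x y _ _ hx hy => rw [extendDer_add]; exact add_mem hx hy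
    | smul c x _ hx => rw [extendDer_smul]; exact Submodule.smul_mem _ _ hx
  -- the log module is contained in the span
  have hle_span : logDer (cA : Set (PS (k+1))) ≤ Submodule.span (PS (k+1)) (Set.range η) := by
    intro ξ hξ
    have hy : ξ (X (Fin.last k)) ∈ Ideal.span {(X (Fin.last k) : PS (k+1))} :=
      hξ _ (by simp [hcA])
    obtain ⟨q, hq⟩ := Ideal.mem_span_singleton'.1 hy
    set ξ' : Der (k+1) := ξ - q • lastDer k with hξ'def
    have hξ'mem : ξ' ∈ logDer (cA : Set (PS (k+1))) :=
      Submodule.sub_mem _ hξ (Submodule.smul_mem _ _ hlastmem)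
    have hξ'y : ξ' (X (Fin.last k)) = 0 := by
      rw [hξ'def, Derivation.sub_apply, Derivation.smul_apply, lastDer_X_last, ← hq,
        smul_eq_mul, sub_self]
    have hξ'span : ξ' ∈ Submodule.span (PS (k+1)) (Set.range η) := by
      rw [recon ξ' hξ'y]
      refine Submodule.sum_mem _ fun m _ => Submodule.smul_mem _ _ ?_
      refine hext_span _ ?_
      rw [hmin.1]
      intro α hα
      exact coefDer_mem ξ' m (hξ'mem _ (by simp [hcA]; exact Or.inr ⟨α, hα, rfl⟩))
    have : ξ = ξ' + q • lastDer k := by rw [hξ'def, sub_add_cancel]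
    rw [this]
    refine add_mem hξ'span (Submodule.smul_mem _ _ ?_)
    exact Submodule.subset_span ⟨Fin.last (s+1), by rw [hη, Fin.snoc_last]⟩
  have hspan : Submodule.span (PS (k+1)) (Set.range η) = logDer (cA : Set (PS (k+1))) :=
    le_antisymm hspan_le hle_span
  -- values of coefDer on the family
  have hρ : ∀ j : Fin (s+2), coefDer (η j) 0 = (Fin.snoc θ (0 : Der k) : Fin (s+2) → Der k) j := by
    intro j
    induction j using Fin.lastCases with
    | last => rw [hη, Fin.snoc_last, Fin.snoc_last, coefDer_lastDer]
    | cast j =>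
      rw [hη, Fin.snoc_castSucc, Fin.snoc_castSucc]
      by_cases hj : j = 0
      · subst hj; rw [if_pos rfl, coefDer_euler, hθE]
      · rw [if_neg hj, coefDer_extendDer]
  -- minimality
  have hminη : ∀ i, η i ∉ Submodule.span (PS (k+1)) (η '' {j | j ≠ i}) := by
    intro i hbad
    have himg : η '' {j | j ≠ i} = Set.range (η ∘ Fin.succAbove i) := by
      rw [Set.range_comp, Fin.range_succAbove]
      rfl
    rw [himg] at hbad
    obtain ⟨c, hc⟩ := (Submodule.mem_span_range_iff_exists_fun (PS (k+1))).1 hbad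
    -- push down with coefDer 0
    have hdown : (Fin.snoc θ (0 : Der k) : Fin (s+2) → Der k) i =
        ∑ j : Fin (s+1), ((emb k (c j)).coeff 0) • (Fin.snoc θ (0 : Der k) : Fin (s+2) → Der k) (Fin.succAbove i j) := by
      rw [← hρ, ← hc, coefDer_sum_smul]
      refine Finset.sum_congr rfl fun j _ => ?_
      simp only [Function.comp_apply]
      rw [hρ]
    induction i using Fin.lastCases with
    | last =>
      -- first, the coefficient of the euler derivation is 1
      have hcy : c 0 * X (Fin.last k) = X (Fin.last k) := by
        have h1 := congrArg (fun D : Der (k+1) => D (X (Fin.last k))) hc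
        rw [Derivation.sum_apply'] at h1
        have h2 : η (Fin.last (s+1)) (X (Fin.last k)) = X (Fin.last k) := by
          rw [hη, Fin.snoc_last, lastDer_X_last]
        rw [h2] at h1
        have h3 : ∀ j ∈ Finset.univ, j ≠ 0 →
            (c j • (η ∘ Fin.succAbove (Fin.last (s+1))) j) (X (Fin.last k)) = 0 := by
          intro j _ hj
          simp only [Function.comp_apply, Fin.succAbove_last_apply]
          rw [hη, Fin.snoc_castSucc, if_neg hj, Derivation.smul_apply, extendDer_X_last,
            smul_zero]
        rw [Finset.sum_eq_single_of_mem 0 (Finset.mem_univ 0) h3] at h1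
        simp only [Function.comp_apply, Fin.succAbove_last_apply] at h1
        rw [hη, Fin.snoc_castSucc, if_pos rfl, Derivation.smul_apply, euler_X,
          smul_eq_mul] at h1
        exact h1
      have hc0 : c 0 = 1 := by
        have hXne : (X (Fin.last k) : PS (k+1)) ≠ 0 := X_ne_zero _
        have := hcy
        rw [← one_mul (X (Fin.last k) : PS (k+1))] at this
        exact mul_right_cancel₀ hXne (by rw [hcy, one_mul])
      -- now the identity downstairs
      have h0 : (0 : Der k) = ∑ j : Fin (s+1), ((emb k (c j)).coeff 0) • θ j := by
        have h4 := hdown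
        rw [Fin.snoc_last] at h4
        rw [h4]
        refine Finset.sum_congr rfl fun j _ => ?_
        rw [Fin.succAbove_last_apply, Fin.snoc_castSucc]
      have hsplit : (0 : Der k) = ((emb k (c 0)).coeff 0) • θ 0 +
          ∑ j ∈ Finset.univ.erase 0, ((emb k (c j)).coeff 0) • θ j := by
        rw [h0]
        exact (Finset.add_sum_erase Finset.univ
          (fun j => ((emb k (c j)).coeff 0) • θ j) (Finset.mem_univ 0)).symm
      have hε : (emb k (c 0)).coeff 0 = 1 := by
        rw [hc0, map_one, Polynomial.coeff_one_zero]
      rw [hε, one_smul] at hsplit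
      have : θ 0 = -∑ j ∈ Finset.univ.erase 0, ((emb k (c j)).coeff 0) • θ j := by
        rw [eq_neg_iff_add_eq_zero]; exact hsplit.symm
      apply hmin.2 0
      rw [this]
      refine Submodule.neg_mem _ (Submodule.sum_mem _ fun j hj => ?_)
      refine Submodule.smul_mem _ _ (Submodule.subset_span ?_)
      exact ⟨j, Finset.ne_of_mem_erase hj, rfl⟩
    | cast i₀ =>
      apply hmin.2 i₀
      have : θ i₀ = ∑ j : Fin (s+1),
          ((emb k (c j)).coeff 0) • (Fin.snoc θ (0 : Der k) : Fin (s+2) → Der k) (Fin.succAbove (Fin.castSucc i₀) j) := by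
        rw [← hdown, Fin.snoc_castSucc]
      rw [this]
      refine Submodule.sum_mem _ fun j _ => ?_
      have hne := Fin.succAbove_ne (Fin.castSucc i₀) j
      rcases Fin.eq_castSucc_or_eq_last (Fin.succAbove (Fin.castSucc i₀) j) with
        ⟨j', hj'⟩ | hlast
      · rw [hj', Fin.snoc_castSucc]
        refine Submodule.smul_mem _ _ (Submodule.subset_span ?_)
        refine ⟨j', ?_, rfl⟩
        intro hjj
        exact hne (by rw [hj', hjj])
      · rw [hlast, Fin.snoc_last, smul_zero]
        exact zero_mem _
    -- done minimality
  refine ⟨⟨hspan, hminη⟩, ?_, ?_, ?_, ?_⟩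
  · -- homogeneity of extensions
    intro i _ j
    induction j using Fin.lastCases with
    | last => rw [extendDer_X_last]; exact isHomogeneous_zero _ _ _
    | cast j => rw [extendDer_X_castSucc]; exact (hhom i j).rename_isHomogeneous
  · -- euler homog
    intro j
    rw [euler_X]
    exact isHomogeneous_X _ _
  · -- lastDer homog
    intro j
    by_cases hj : j = Fin.last k
    · subst hj; rw [lastDer_X_last]; exact isHomogeneous_X _ _
    · obtain ⟨j', rfl⟩ := Fin.exists_castSucc_eq.2 hj
      rw [lastDer_X_castSucc]
      exact isHomogeneous_zero _ _ _
  · -- HasExp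
    refine ⟨s + 2, η, Fin.snoc d 1, ?_, ⟨hspan, hminη⟩, ?_⟩
    · intro j
      induction j using Fin.lastCases with
      | last =>
        rw [hη, Fin.snoc_last, Fin.snoc_last]
        intro j
        by_cases hj : j = Fin.last k
        · subst hj; rw [lastDer_X_last]; exact isHomogeneous_X _ _
        · obtain ⟨j', rfl⟩ := Fin.exists_castSucc_eq.2 hj
          rw [lastDer_X_castSucc]
          exact isHomogeneous_zero _ _ _
      | cast j =>
        rw [hη, Fin.snoc_castSucc, Fin.snoc_castSucc]
        by_cases hj : j = 0
        · subst hj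
          rw [if_pos rfl, hd0]
          intro j'
          rw [euler_X]
          exact isHomogeneous_X _ _
        · rw [if_neg hj]
          intro j'
          induction j' using Fin.lastCases with
          | last => rw [extendDer_X_last]; exact isHomogeneous_zero _ _ _
          | cast j'' => rw [extendDer_X_castSucc]; exact (hhom j j'').rename_isHomogeneous
    · -- the multiset identity
      conv_rhs => rw [Fin.univ_castSuccEmb]
      rw [Finset.cons_val, Multiset.map_cons, Fin.snoc_last, Finset.map_val, Multiset.map_map]
      congr 1
      refine Multiset.map_congr rfl fun j _ => ?_
      simp [Fin.snoc_castSucc]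

end
end

section
/- Let 𝒜 be an arrangement in ℂ³, let 𝒜_ℓ ⊂ ℂ^ℓ be obtained from 𝒜 by (ℓ−3) successive conings (adding coordinate hyperplanes x_j = 0 for j = 4,…,ℓ), and let H ⊂ ℂ^ℓ be a hyperplane combinatorially generic with respect to 𝒜_ℓ. For 3 ≤ k ≤ ℓ set H_k := H ∩ {x_{k+1}=0} ∩ … ∩ {x_ℓ=0}, a hyperplane in ℂ^k, and let 𝒜_k denote the (k−3)-fold coning of 𝒜. Then H_k is combinatorially generic with respect to 𝒜_k for every k = 3, …, ℓ. -/
open MvPolynomial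

noncomputable section

/-- The coordinate hyperplanes `x_{j} = 0` for `3 ≤ j < k` (0-indexed), i.e. the
hyperplanes `x₄,…,x_k` added by the successive conings. -/
def coningCoords (ℓ k : ℕ) : Finset (PS ℓ) :=
  letI : DecidableEq (PS ℓ) := Classical.decEq _
  (Finset.univ.filter fun j : Fin ℓ => 3 ≤ (j : ℕ) ∧ (j : ℕ) < k).image X

/-- Setting the variables `x_{k+1}, …, x_ℓ` to zero (0-indexed: variables of index `≥ k`). -/
def truncTo (ℓ k : ℕ) : PS ℓ →ₐ[ℂ] PS ℓ :=
  aeval fun j : Fin ℓ => if (j : ℕ) < k then X j else 0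


section AuxLemmas

lemma degree_one_single {σ : Type*} (d : σ →₀ ℕ) (hd : d.degree = 1) :
    ∃ i, d = Finsupp.single i 1 := by
  classical
  have hsum : ∑ i ∈ d.support, d i = 1 := hd
  have hne : d.support.Nonempty := by
    by_contra h
    rw [Finset.not_nonempty_iff_eq_empty] at h
    simp [h] at hsum
  obtain ⟨i, hi⟩ := hne
  refine ⟨i, ?_⟩
  ext j
  rcases eq_or_ne j i with rfl | hj
  · have h1 : 1 ≤ d j := Nat.one_le_iff_ne_zero.mpr (Finsupp.mem_support_iff.mp hi)
    have h2 : d j ≤ 1 := hsum ▸ Finset.single_le_sum (fun _ _ => Nat.zero_le _) hi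
    simp only [Finsupp.single_eq_same]
    omega
  · rw [Finsupp.single_apply, if_neg (Ne.symm hj)]
    by_contra h
    have hjs : j ∈ d.support := Finsupp.mem_support_iff.mpr h
    have hsub : ({i, j} : Finset σ) ⊆ d.support := by
      intro x hx
      rcases Finset.mem_insert.mp hx with rfl | hx
      · exact hi
      · rwa [Finset.mem_singleton.mp hx]
    have h2 : d i + d j ≤ ∑ x ∈ d.support, d x := by
      rw [← Finset.sum_pair (Ne.symm hj)]
      exact Finset.sum_le_sum_of_subset hsub
    have h3 : 1 ≤ d i := Nat.one_le_iff_ne_zero.mpr (Finsupp.mem_support_iff.mp hi)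
    have h4 : 1 ≤ d j := Nat.one_le_iff_ne_zero.mpr h
    omega

lemma homog_one_mem_span {n : ℕ} {p : PS n} (hp : p.IsHomogeneous 1) :
    p ∈ Submodule.span ℂ (Set.range (X : Fin n → PS n)) := by
  classical
  rw [p.as_sum]
  refine Submodule.sum_mem _ fun d hd => ?_
  have hdeg : d.degree = 1 := by
    rw [Finsupp.degree_eq_weight_one]
    exact hp (mem_support_iff.mp hd)
  obtain ⟨i, rfl⟩ := degree_one_single d hdeg
  have hX : monomial (Finsupp.single i 1) (coeff (Finsupp.single i 1) p)
      = (coeff (Finsupp.single i 1) p) • X i := by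
    rw [X, smul_monomial, smul_eq_mul, mul_one]
  rw [hX]
  exact Submodule.smul_mem _ _ (Submodule.subset_span ⟨i, rfl⟩)

lemma trunc_mem_spans {n k : ℕ} {p : PS n}
    (hp : p ∈ Submodule.span ℂ (Set.range (X : Fin n → PS n))) :
    truncTo n k p ∈ Submodule.span ℂ (X '' {i : Fin n | (i : ℕ) < k}) ∧
      p - truncTo n k p ∈ Submodule.span ℂ (X '' {i : Fin n | k ≤ (i : ℕ)}) := by
  induction hp using Submodule.span_induction with
  | mem x hx =>
    obtain ⟨i, rfl⟩ := hx
    by_cases h : (i : ℕ) < k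
    · constructor
      · have : truncTo n k (X i) = X i := by simp [truncTo, h]
        rw [this]
        exact Submodule.subset_span ⟨i, h, rfl⟩
      · have : truncTo n k (X i) = X i := by simp [truncTo, h]
        rw [this, sub_self]
        exact Submodule.zero_mem _
    · have : truncTo n k (X i) = 0 := by simp [truncTo, h]
      rw [this, sub_zero]
      exact ⟨Submodule.zero_mem _, Submodule.subset_span ⟨i, le_of_not_gt h, rfl⟩⟩
  | zero => simp
  | add x y hx hy ihx ihy =>
    refine ⟨?_, ?_⟩
    · rw [map_add]; exact Submodule.add_mem _ ihx.1 ihy.1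
    · rw [map_add]
      have : x + y - (truncTo n k x + truncTo n k y)
          = (x - truncTo n k x) + (y - truncTo n k y) := by ring
      rw [this]; exact Submodule.add_mem _ ihx.2 ihy.2
  | smul c x hx ih =>
    refine ⟨?_, ?_⟩
    · rw [map_smul]; exact Submodule.smul_mem _ _ ih.1
    · rw [map_smul]
      have : c • x - c • truncTo n k x = c • (x - truncTo n k x) := by
        rw [smul_sub]
      rw [this]; exact Submodule.smul_mem _ _ ih.2

lemma mem_supported_disj {n k : ℕ} {p : PS n}
    (h1 : p ∈ Subalgebra.toSubmodule (supported ℂ {i : Fin n | (i : ℕ) < k}))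
    (h2 : p ∈ Submodule.span ℂ (X '' {i : Fin n | k ≤ (i : ℕ)})) : p = 0 := by
  have hs2 : p ∈ supported ℂ {i : Fin n | k ≤ (i : ℕ)} := by
    have hle : Submodule.span ℂ (X '' {i : Fin n | k ≤ (i : ℕ)})
        ≤ Subalgebra.toSubmodule (supported ℂ {i : Fin n | k ≤ (i : ℕ)}) := by
      rw [Submodule.span_le]
      rintro x ⟨i, hi, rfl⟩
      exact X_mem_supported.mpr hi
    exact hle h2
  have hhom : p.IsHomogeneous 1 := by
    have hle : Submodule.span ℂ (X '' {i : Fin n | k ≤ (i : ℕ)})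
        ≤ homogeneousSubmodule (Fin n) ℂ 1 := by
      rw [Submodule.span_le]
      rintro x ⟨i, hi, rfl⟩
      exact isHomogeneous_X ℂ i
    exact hle h2
  have hv1 : ↑p.vars ⊆ {i : Fin n | (i : ℕ) < k} := mem_supported.mp h1
  have hv2 : ↑p.vars ⊆ {i : Fin n | k ≤ (i : ℕ)} := mem_supported.mp hs2
  by_contra hp0
  obtain ⟨d, hd⟩ := Finset.nonempty_iff_ne_empty.mpr
    (fun h => hp0 (support_eq_empty.mp h))
  have hdeg : d.degree = 1 := by
    rw [Finsupp.degree_eq_weight_one]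
    exact hhom (mem_support_iff.mp hd)
  obtain ⟨i, rfl⟩ := degree_one_single d hdeg
  have hiv : i ∈ p.vars := (mem_vars i).mpr ⟨_, hd, by simp⟩
  have hc1 := hv1 hiv
  have hc2 := hv2 hiv
  simp only [Set.mem_setOf_eq] at hc1 hc2
  omega

lemma rk_congr {n : ℕ} {S T : Finset (PS n)}
    (h : Submodule.span ℂ (S : Set (PS n)) = Submodule.span ℂ (T : Set (PS n))) :
    rk S = rk T := by unfold rk; rw [h]

lemma rk_union_of_disjoint {n : ℕ} (S T : Finset (PS n))
    (h : Submodule.span ℂ (S : Set (PS n)) ⊓ Submodule.span ℂ (T : Set (PS n)) = ⊥) :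
    rk (S ∪ T) = rk S + rk T := by
  classical
  have hfd := Submodule.finrank_sup_add_finrank_inf_eq
    (Submodule.span ℂ (S : Set (PS n))) (Submodule.span ℂ (T : Set (PS n)))
  rw [h, finrank_bot, add_zero] at hfd
  unfold rk
  rw [Finset.coe_union, Submodule.span_union, hfd]

lemma card_filter_ge {n k : ℕ} (hk : k ≤ n) :
    (Finset.univ.filter fun j : Fin n => k ≤ (j : ℕ)).card = n - k := by
  classical
  have hadd := Finset.card_filter_add_card_filter_not
    (s := (Finset.univ : Finset (Fin n))) (p := fun j : Fin n => (j : ℕ) < k)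
  simp only [not_lt] at hadd
  have hlt : (Finset.univ.filter fun j : Fin n => (j : ℕ) < k).card = k := by
    have hmap : (Finset.univ.filter fun j : Fin n => (j : ℕ) < k)
        = Finset.map (Fin.castLEEmb hk) (Finset.univ : Finset (Fin k)) := by
      ext j
      simp only [Finset.mem_filter, Finset.mem_univ, true_and, Finset.mem_map]
      constructor
      · intro hj
        exact ⟨⟨(j : ℕ), hj⟩, by ext; simp⟩
      · rintro ⟨i, rfl⟩
        simp
    rw [hmap, Finset.card_map, Finset.card_univ, Fintype.card_fin]
  rw [Finset.card_univ, Fintype.card_fin] at hadd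
  omega

lemma rk_X_image {n : ℕ} (s : Finset (Fin n)) :
    rk (s.image X) = s.card := by
  classical
  have hli : LinearIndependent ℂ
      ((↑) : ((s.image X : Finset (PS n)) : Set (PS n)) → PS n) := by
    refine (fun h hs => LinearIndepOn.mono (R := ℂ) (v := id) (s := Set.range (X : Fin n → PS n)) hs h) ?_ ?_
    · intro x hx
      simp only [Finset.coe_image, Set.mem_image] at hx
      obtain ⟨i, _, rfl⟩ := hx
      exact ⟨i, rfl⟩
    · exact (MvPolynomial.linearIndependent_X (Fin n) ℂ).linearIndepOn_id
  have hfr := finrank_span_finset_eq_card hli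
  unfold rk
  rw [hfr, Finset.card_image_of_injective _ MvPolynomial.X_injective]

lemma span_insert_congr {n : ℕ} (a b : PS n) (s : Set (PS n))
    (h : a - b ∈ Submodule.span ℂ s) :
    Submodule.span ℂ (insert a s) = Submodule.span ℂ (insert b s) := by
  have key : ∀ x y : PS n, x - y ∈ Submodule.span ℂ s →
      Submodule.span ℂ (insert x s) ≤ Submodule.span ℂ (insert y s) := by
    intro x y hxy
    rw [Submodule.span_le]
    intro z hz
    rcases Set.mem_insert_iff.mp hz with rfl | hzs
    · have h1 : y ∈ Submodule.span ℂ (insert y s) :=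
        Submodule.subset_span (Set.mem_insert _ _)
      have h2 : z - y ∈ Submodule.span ℂ (insert y s) :=
        Submodule.span_mono (Set.subset_insert _ _) hxy
      have h3 := Submodule.add_mem _ h1 h2
      simpa using h3
    · exact Submodule.subset_span (Set.mem_insert_iff.mpr (Or.inr hzs))
  refine le_antisymm (key a b h) (key b a ?_)
  have := Submodule.neg_mem _ h
  simpa using this

end AuxLemmas

/-- if `H` is combinatorially generic with respect to the iterated coning
`𝒜_ℓ` of a rank-3 arrangement `𝒜`, then each `H_k = H ∩ {x_{k+1} = 0} ∩ … ∩ {x_ℓ = 0}` is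
combinatorially generic with respect to the `(k−3)`-fold coning `𝒜_k`, `3 ≤ k ≤ ℓ`. -/
theorem truncated_generic_hyperplane {ℓ : ℕ} (hℓ : 3 ≤ ℓ) (A : Finset (PS ℓ))
    (hA : ∀ β ∈ A, IsLinForm β ∧ β ∈ MvPolynomial.supported ℂ {i : Fin ℓ | (i : ℕ) < 3})
    (αH : PS ℓ) (hαlin : IsLinForm αH)
    (hgen : CombGeneric αH (A ∪ coningCoords ℓ ℓ) ℓ) :
    ∀ k, 3 ≤ k → k ≤ ℓ →
      CombGeneric (truncTo ℓ k αH) (A ∪ coningCoords ℓ k) k := by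
  classical
  intro k hk3 hkl B hB
  set t : PS ℓ := truncTo ℓ k αH with ht
  set Cs : Finset (PS ℓ) :=
    (Finset.univ.filter fun j : Fin ℓ => k ≤ (j : ℕ)).image X with hCs
  have hCcoe : (Cs : Set (PS ℓ)) = X '' {i : Fin ℓ | k ≤ (i : ℕ)} := by
    rw [hCs, Finset.coe_image]
    congr 1
    ext i
    simp
  -- support bound for the truncated form and for B
  have hαspan := homog_one_mem_span hαlin.1
  obtain ⟨htmem, hdiff⟩ := trunc_mem_spans (k := k) hαspan
  have hXk_le : Submodule.span ℂ (X '' {i : Fin ℓ | (i : ℕ) < k})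
      ≤ Subalgebra.toSubmodule (supported ℂ {i : Fin ℓ | (i : ℕ) < k}) := by
    rw [Submodule.span_le]
    rintro x ⟨i, hi, rfl⟩
    exact X_mem_supported.mpr hi
  have hBsupp : ∀ β ∈ B, β ∈ Subalgebra.toSubmodule
      (supported ℂ {i : Fin ℓ | (i : ℕ) < k}) := by
    intro β hβ
    rcases Finset.mem_union.mp (hB hβ) with h | h
    · refine supported_mono ?_ (hA β h).2
      intro i hi
      exact lt_of_lt_of_le hi hk3
    · simp only [coningCoords, Finset.mem_image, Finset.mem_filter,
        Finset.mem_univ, true_and] at h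
      obtain ⟨j, ⟨_, hj2⟩, rfl⟩ := h
      exact X_mem_supported.mpr hj2
  have hins_le : Submodule.span ℂ (insert t (B : Set (PS ℓ)))
      ≤ Subalgebra.toSubmodule (supported ℂ {i : Fin ℓ | (i : ℕ) < k}) := by
    rw [Submodule.span_le]
    intro x hx
    rcases Set.mem_insert_iff.mp hx with rfl | hx
    · exact hXk_le htmem
    · exact hBsupp x hx
  -- disjointness of spans
  have hdisj : ∀ S : Finset (PS ℓ),
      Submodule.span ℂ (S : Set (PS ℓ)) ≤
        Subalgebra.toSubmodule (supported ℂ {i : Fin ℓ | (i : ℕ) < k}) →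
      Submodule.span ℂ (S : Set (PS ℓ)) ⊓ Submodule.span ℂ (Cs : Set (PS ℓ)) = ⊥ := by
    intro S hle
    rw [eq_bot_iff]
    rintro x ⟨h1, h2⟩
    rw [hCcoe] at h2
    exact (Submodule.mem_bot ℂ).mpr (mem_supported_disj (hle h1) h2)
  -- rank of the extra coordinates
  have hrkCs : rk Cs = ℓ - k := by
    rw [hCs, rk_X_image, card_filter_ge hkl]
  -- B ∪ Cs is a subarrangement of the full coned arrangement
  have hBC_sub : B ∪ Cs ⊆ A ∪ coningCoords ℓ ℓ := by
    intro x hx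
    rcases Finset.mem_union.mp hx with hx | hx
    · rcases Finset.mem_union.mp (hB hx) with h | h
      · exact Finset.mem_union.mpr (Or.inl h)
      · simp only [coningCoords, Finset.mem_image, Finset.mem_filter,
          Finset.mem_univ, true_and] at h ⊢
        obtain ⟨j, ⟨hj1, hj2⟩, rfl⟩ := h
        refine Finset.mem_union.mpr (Or.inr ?_)
        simp only [coningCoords, Finset.mem_image, Finset.mem_filter,
          Finset.mem_univ, true_and]
        exact ⟨j, ⟨hj1, j.isLt⟩, rfl⟩
    · rw [hCs] at hx
      simp only [Finset.mem_image, Finset.mem_filter, Finset.mem_univ, true_and] at hx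
      obtain ⟨j, hj, rfl⟩ := hx
      refine Finset.mem_union.mpr (Or.inr ?_)
      simp only [coningCoords, Finset.mem_image, Finset.mem_filter,
        Finset.mem_univ, true_and]
      exact ⟨j, ⟨le_trans hk3 hj, j.isLt⟩, rfl⟩
  have key := hgen (B ∪ Cs) hBC_sub
  -- replace αH by its truncation inside the big span
  have hdiff' : αH - t ∈ Submodule.span ℂ ((B ∪ Cs : Finset (PS ℓ)) : Set (PS ℓ)) := by
    refine Submodule.span_mono ?_ (hCcoe ▸ hdiff)
    rw [Finset.coe_union]
    exact Set.subset_union_right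
  have hsp_eq : Submodule.span ℂ ((insert αH (B ∪ Cs) : Finset (PS ℓ)) : Set (PS ℓ))
      = Submodule.span ℂ ((insert t (B ∪ Cs) : Finset (PS ℓ)) : Set (PS ℓ)) := by
    rw [Finset.coe_insert, Finset.coe_insert]
    exact span_insert_congr _ _ _ hdiff'
  have e1 : rk (insert αH (B ∪ Cs)) = rk (insert t B) + (ℓ - k) := by
    rw [rk_congr hsp_eq]
    have hins : insert t (B ∪ Cs) = (insert t B) ∪ Cs := by
      rw [Finset.insert_union]
    rw [hins, rk_union_of_disjoint _ _ (hdisj _ (by rw [Finset.coe_insert]; exact hins_le)),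
      hrkCs]
  have e2 : rk (B ∪ Cs) = rk B + (ℓ - k) := by
    have hB_le : Submodule.span ℂ (B : Set (PS ℓ)) ≤
        Subalgebra.toSubmodule (supported ℂ {i : Fin ℓ | (i : ℕ) < k}) := by
      rw [Submodule.span_le]
      exact fun x hx => hBsupp x hx
    rw [rk_union_of_disjoint _ _ (hdisj _ hB_le), hrkCs]
  rw [e1, e2] at key
  omega

end
end

section
/- Let ρ : D(𝓑_k) → D(𝓑_{k−1}) = D(𝓑_k^{H_k}) be the Euler restriction map at the hyperplane H_k, where coordinates are normalized so that the restriction to H_k is given by substituting x_k ↦ −α_{H_{k−1}} (equivalently x̄_k = −α_{H_{k−1}} in S/(α_{H_k})). Then for θ_i a derivation involving only x₁,x₂,x₃ with θ_i ∈ D(𝒜), one has ρ(φ_i^k) = −α_{H_{k−1}} θ_i, where φ_i^k := x_k θ_i − θ_i(α_H)(x_k ∂/∂x_k). Moreover, for 4 ≤ i < k, ρ(η_i^k) = −α_{H_{k−1}} x_i ∂/∂x_i, where η_i^k = x_i x_k(∂_{x_i} − ∂_{x_k}). -/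
open MvPolynomial

noncomputable section

/-- If a substitution fixes every variable in `s`, it fixes every polynomial supported
in `s`. -/
lemma aeval_fixed_of_supported {n : ℕ} {s : Set (Fin n)} (g : Fin n → PS n)
    (hg : ∀ t ∈ s, g t = X t) {p : PS n} (hp : p ∈ MvPolynomial.supported ℂ s) :
    aeval g p = p := by
  refine Algebra.adjoin_induction ?_ ?_ ?_ ?_ hp
  · rintro x ⟨t, ht, rfl⟩; simp [hg t ht]
  · intro r; simp
  · intro x y _ _ hx hy; rw [map_add, hx, hy]
  · intro x y _ _ hx hy; rw [map_mul, hx, hy]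

/-- A twisted-derivation identity can be checked on the variables. -/
lemma sigma_comp_der {n : ℕ} (σA : PS n →ₐ[ℂ] PS n) (D E : Der n)
    (h : ∀ t, σA (D (X t)) = E (σA (X t))) (f : PS n) : σA (D f) = E (σA f) := by
  induction f using MvPolynomial.induction_on with
  | C a =>
    rw [← MvPolynomial.algebraMap_eq, Derivation.map_algebraMap, AlgHom.commutes,
      Derivation.map_algebraMap, map_zero]
  | add f g hf hg => simp [hf, hg]
  | mul_X f i hf =>
    rw [D.leibniz, map_add, map_mul, E.leibniz]
    simp only [smul_eq_mul, map_mul, hf, h]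
    try ring

/-- computation of the Euler restriction at `H_k`.  With coordinates
normalized so that `α_{H_k} = α_{H_{k−1}} + x_k` (so restriction to `H_k` is the
substitution `x_k ↦ −α_{H_{k−1}}`, realized by the algebra map `σ`), for a derivation `θ`
involving only `x₁,x₂,x₃` with `θ ∈ D(𝒜)` one has `ρ(φ^k) = −α_{H_{k−1}} θ` for
`φ^k = x_k θ − θ(α_H)(x_k ∂_{x_k})`, and `ρ(η_i^k) = −α_{H_{k−1}} x_i ∂_{x_i}` for
`η_i^k = x_i x_k (∂_{x_i} − ∂_{x_k})`, `4 ≤ i < k`. -/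
theorem euler_restriction_of_phi_and_eta {ℓ : ℕ} (hℓ : 3 ≤ ℓ)
    (A : Finset (PS (ℓ + 1)))
    (hA : ∀ β ∈ A, IsLinForm β ∧
      β ∈ MvPolynomial.supported ℂ {t : Fin (ℓ + 1) | (t : ℕ) < 3})
    (αprev : PS (ℓ + 1)) (hαlin : (αprev + X (Fin.last ℓ)).IsHomogeneous 1)
    (hprevsupp : αprev ∈ MvPolynomial.supported ℂ {t : Fin (ℓ + 1) | t ≠ Fin.last ℓ})
    (hnorm : ∀ i : Fin (ℓ + 1), 3 ≤ (i : ℕ) → (i : ℕ) < ℓ → pderiv i αprev = 1)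
    (θ : Der (ℓ + 1)) (hθ : θ ∈ logDer (A : Set (PS (ℓ + 1))))
    (hθsupp : ∀ i : Fin (ℓ + 1),
      θ (X i) ∈ MvPolynomial.supported ℂ {t : Fin (ℓ + 1) | (t : ℕ) < 3} ∧
        (3 ≤ (i : ℕ) → θ (X i) = 0)) :
    -- the substitution `x_k ↦ −α_{H_{k−1}}` realizing the Euler restriction:
    letI σ : PS (ℓ + 1) →ₐ[ℂ] PS (ℓ + 1) :=
      aeval (fun i : Fin (ℓ + 1) => if i = Fin.last ℓ then -αprev else X i)
    -- `ρ(φ^k) = −α_{H_{k−1}} θ`: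
    (∀ f : PS (ℓ + 1),
      σ ((X (Fin.last ℓ) : PS (ℓ + 1)) * θ f -
          θ (αprev + X (Fin.last ℓ)) * (X (Fin.last ℓ) * pderiv (Fin.last ℓ) f)) =
        -αprev * θ (σ f)) ∧
    -- `ρ(η_i^k) = −α_{H_{k−1}} x_i ∂_{x_i}` for `4 ≤ i < k`:
    (∀ i : Fin (ℓ + 1), 3 ≤ (i : ℕ) → (i : ℕ) < ℓ →
      ∀ f : PS (ℓ + 1),
        σ ((X i : PS (ℓ + 1)) * X (Fin.last ℓ) *
            (pderiv i f - pderiv (Fin.last ℓ) f)) =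
          -(αprev * (X i * pderiv i (σ f)))) := by
  set σ : PS (ℓ + 1) →ₐ[ℂ] PS (ℓ + 1) :=
    aeval (fun i : Fin (ℓ + 1) => if i = Fin.last ℓ then -αprev else X i) with hσdef
  have hk : ((Fin.last ℓ : Fin (ℓ + 1)) : ℕ) = ℓ := rfl
  have hσX : ∀ t : Fin (ℓ + 1),
      σ (X t) = if t = Fin.last ℓ then -αprev else X t := fun t => by
    rw [hσdef]; simp
  have hσk : σ (X (Fin.last ℓ)) = -αprev := by simp [hσX]
  have hσt : ∀ t : Fin (ℓ + 1), t ≠ Fin.last ℓ → σ (X t) = X t := fun t ht => by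
    simp [hσX, ht]
  have hfix : ∀ p ∈ MvPolynomial.supported ℂ {t : Fin (ℓ + 1) | t ≠ Fin.last ℓ},
      σ p = p := fun p hp =>
    aeval_fixed_of_supported _ (fun t ht => by simp [Set.mem_setOf_eq] at ht; simp [ht]) hp
  have hsub : {t : Fin (ℓ + 1) | (t : ℕ) < 3} ⊆ {t : Fin (ℓ + 1) | t ≠ Fin.last ℓ} := by
    intro t ht hteq
    simp [Set.mem_setOf_eq] at ht
    rw [hteq] at ht
    rw [hk] at ht
    omega
  have hfixθX : ∀ t, σ (θ (X t)) = θ (X t) := fun t =>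
    hfix _ (MvPolynomial.supported_mono hsub (hθsupp t).1)
  have hθk : θ (X (Fin.last ℓ)) = 0 := (hθsupp (Fin.last ℓ)).2 (by rw [hk]; omega)
  have hαfix : σ αprev = αprev ∧ σ (θ αprev) = θ αprev := by
    refine Algebra.adjoin_induction ?_ ?_ ?_ ?_ hprevsupp
    · rintro x ⟨t, ht, rfl⟩
      simp [Set.mem_setOf_eq] at ht
      exact ⟨hσt t ht, hfixθX t⟩
    · intro r
      refine ⟨by simp, ?_⟩
      rw [Derivation.map_algebraMap, map_zero]
    · rintro x y _ _ ⟨h1, h2⟩ ⟨h3, h4⟩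
      exact ⟨by simp [h1, h3], by simp [h2, h4]⟩
    · rintro x y _ _ ⟨h1, h2⟩ ⟨h3, h4⟩
      refine ⟨by simp [h1, h3], ?_⟩
      rw [Derivation.leibniz, map_add, smul_eq_mul, smul_eq_mul, map_mul, map_mul,
        h1, h2, h3, h4]
  constructor
  · -- first identity
    set D1 : Der (ℓ + 1) :=
      (X (Fin.last ℓ) : PS (ℓ + 1)) • θ -
        (θ (αprev + X (Fin.last ℓ)) * X (Fin.last ℓ)) • pderiv (Fin.last ℓ) with hD1
    set E1 : Der (ℓ + 1) := (-αprev) • θ with hE1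
    have hθα : θ (αprev + X (Fin.last ℓ)) = θ αprev := by
      rw [map_add, hθk, add_zero]
    have key : ∀ t, σ (D1 (X t)) = E1 (σ (X t)) := by
      intro t
      by_cases ht : t = Fin.last ℓ
      · subst ht
        simp only [hD1, hE1, Derivation.sub_apply, Derivation.smul_apply, smul_eq_mul,
          hθk, hθα, pderiv_X_self, hσk]
        rw [map_sub, map_mul, map_mul, map_mul, hσk, hαfix.2]
        simp only [map_zero, map_one, map_neg]
        ring
      · simp only [hD1, hE1, Derivation.sub_apply, Derivation.smul_apply, smul_eq_mul,
          pderiv_X_of_ne ht, mul_zero, sub_zero, hσt t ht]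
        rw [map_mul, hσk, hfixθX t]
    intro f
    have h := sigma_comp_der σ D1 E1 key f
    simp only [hD1, hE1, Derivation.sub_apply, Derivation.smul_apply, smul_eq_mul] at h
    rw [show (X (Fin.last ℓ) : PS (ℓ + 1)) * θ f -
        θ (αprev + X (Fin.last ℓ)) * (X (Fin.last ℓ) * pderiv (Fin.last ℓ) f) =
        X (Fin.last ℓ) * θ f -
        θ (αprev + X (Fin.last ℓ)) * X (Fin.last ℓ) * pderiv (Fin.last ℓ) f by ring]
    exact h
  · -- second identity
    intro i hi3 hiℓ
    have hik : i ≠ Fin.last ℓ := by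
      intro h; rw [h, hk] at hiℓ; omega
    set D2 : Der (ℓ + 1) :=
      ((X i : PS (ℓ + 1)) * X (Fin.last ℓ)) • (pderiv i - pderiv (Fin.last ℓ)) with hD2
    set E2 : Der (ℓ + 1) := (-αprev * X i) • pderiv i with hE2
    have key : ∀ t, σ (D2 (X t)) = E2 (σ (X t)) := by
      intro t
      by_cases ht : t = Fin.last ℓ
      · subst ht
        simp only [hD2, hE2, Derivation.smul_apply, Derivation.sub_apply, smul_eq_mul,
          pderiv_X_self, pderiv_X_of_ne (Ne.symm hik), hσk, zero_sub]
        rw [map_neg, map_mul, map_mul, hσt i hik, hσk, map_neg, hnorm i hi3 hiℓ,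
          map_one]
        ring
      · by_cases hti : t = i
        · subst hti
          simp only [hD2, hE2, Derivation.smul_apply, Derivation.sub_apply, smul_eq_mul,
            pderiv_X_self, pderiv_X_of_ne ht, sub_zero, mul_one, hσt t ht]
          rw [map_mul, hσt t ht, hσk]
          ring
        · simp only [hD2, hE2, Derivation.smul_apply, Derivation.sub_apply, smul_eq_mul,
            pderiv_X_of_ne hti, pderiv_X_of_ne ht,
            sub_zero, mul_zero, map_zero, hσt t ht]
    intro f
    have h := sigma_comp_der σ D2 E2 key f
    simp only [hD2, hE2, Derivation.smul_apply, Derivation.sub_apply, smul_eq_mul] at h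
    rw [show (X i : PS (ℓ + 1)) * X (Fin.last ℓ) *
        (pderiv i f - pderiv (Fin.last ℓ) f) =
        X i * X (Fin.last ℓ) * (pderiv i f - pderiv (Fin.last ℓ) f) by ring]
    rw [h]; ring

end
end
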